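/- Let Z be a real-valued function on the set of quantum states on ℂ^d satisfying bounded concavity: for every finite probability distribution λ = (λ_k) and states ρ_k, one has 0 ≤ Z(∑_k λ_k ρ_k) − ∑_k λ_k Z(ρ_k) ≤ H(λ). Let κ = sup over pairs of states (μ,ν) of |Z(μ) − Z(ν)|, and assume κ < ∞. Then for all quantum states ρ, σ and all ε ≥ 0 with (1/2)‖ρ − σ‖₁ ≤ ε, one has |Z(ρ) − Z(σ)| ≤ g(ε) + ε·κ. -/

import Mathlib

open scoped BigOperators ComplexOrder Classical

noncomputable section

/-- Shannon entropy of a finitely supported distribution, with `0 log 0 = 0`. -/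
def shannonEntropy {ι : Type*} [Fintype ι] (p : ι → ℝ) : ℝ :=
  -∑ i, p i * Real.log (p i)

/-- A quantum state: positive semidefinite with unit trace. -/
def IsState {n : Type*} [Fintype n] (ρ : Matrix n n ℂ) : Prop :=
  ρ.PosSemidef ∧ ρ.trace = 1

/-- A POVM: positive semidefinite elements summing to the identity. -/
def IsPOVM {ι n : Type*} [Fintype ι] [Fintype n] [DecidableEq n]
    (M : ι → Matrix n n ℂ) : Prop :=
  (∀ i, (M i).PosSemidef) ∧ ∑ i, M i = 1

/-- Observational entropy `S_M(ρ) = -∑ p_i log (p_i / V_i)`. -/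
def obsEntropy {ι n : Type*} [Fintype ι] [Fintype n]
    (M : ι → Matrix n n ℂ) (ρ : Matrix n n ℂ) : ℝ :=
  -∑ i, ((M i * ρ).trace.re * Real.log ((M i * ρ).trace.re / (M i).trace.re))

/-- The function `g(x) = -x log x + (1+x) log(1+x)`. -/
def gFun (x : ℝ) : ℝ := -(x * Real.log x) + (1 + x) * Real.log (1 + x)

/-- Square root of a positive semidefinite matrix (Mathlib's former `Matrix.PosSemidef.sqrt`). -/
def Matrix.PosSemidef.sqrt {n : Type*} [Fintype n] [DecidableEq n] {A : Matrix n n ℂ}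
    (hA : A.PosSemidef) : Matrix n n ℂ :=
  (hA.1.eigenvectorUnitary : Matrix n n ℂ) *
    Matrix.diagonal ((↑) ∘ Real.sqrt ∘ hA.1.eigenvalues) *
    (star (hA.1.eigenvectorUnitary : Matrix n n ℂ))

/-- Trace norm of a square complex matrix. -/
def traceNorm {n : Type*} [Fintype n] [DecidableEq n] (X : Matrix n n ℂ) : ℝ :=
  ((Matrix.posSemidef_conjTranspose_mul_self X).sqrt).trace.re

/-- Matrix logarithm of a Hermitian matrix via the spectral decomposition,
with the convention `log 0 = 0` on the kernel; junk value `0` on non-Hermitian input. -/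
def matLog {n : Type*} [Fintype n] [DecidableEq n] (A : Matrix n n ℂ) : Matrix n n ℂ :=
  if hA : A.IsHermitian then
    (hA.eigenvectorUnitary : Matrix n n ℂ) *
      Matrix.diagonal (fun i => (Real.log (hA.eigenvalues i) : ℂ)) *
      (star (hA.eigenvectorUnitary : Matrix n n ℂ))
  else 0

/-- Von Neumann entropy `S(ρ) = -tr(ρ log ρ)`. -/
def vnEntropy {n : Type*} [Fintype n] [DecidableEq n] (ρ : Matrix n n ℂ) : ℝ :=
  -((ρ * matLog ρ).trace.re)

/-- Quantum relative entropy, as an extended real number: `tr(μ (log μ - log ν))` when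
`supp μ ⊆ supp ν` (both Hermitian), and `+∞` otherwise. -/
def qRelEntropy {n : Type*} [Fintype n] [DecidableEq n] (μ ν : Matrix n n ℂ) : EReal :=
  if μ.IsHermitian ∧ ν.IsHermitian ∧
      LinearMap.range (Matrix.toLin' μ) ≤ LinearMap.range (Matrix.toLin' ν) then
    (((μ * (matLog μ - matLog ν)).trace.re : ℝ) : EReal)
  else ⊤

/-- Real-valued quantum relative entropy `tr(μ (log μ - log ν))` (meaningful when
`supp μ ⊆ supp ν`). -/
def qRelEntropyR {n : Type*} [Fintype n] [DecidableEq n] (μ ν : Matrix n n ℂ) : ℝ :=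
  (μ * (matLog μ - matLog ν)).trace.re






lemma gFun_hasDerivAt {x : ℝ} (hx : 0 < x) :
    HasDerivAt gFun (Real.log (1 + x) - Real.log x) x := by
  have h1 : HasDerivAt (fun y : ℝ => y * Real.log y) (Real.log x + 1) x :=
    Real.hasDerivAt_mul_log hx.ne'
  have h0 : HasDerivAt (fun y : ℝ => 1 + y) 1 x := (hasDerivAt_id x).const_add 1
  have h2 : HasDerivAt (fun y : ℝ => (1 + y) * Real.log (1 + y))
      ((Real.log (1 + x) + 1) * 1) x :=
    (Real.hasDerivAt_mul_log (by linarith : (1 : ℝ) + x ≠ 0)).comp x h0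
  have h3 := h1.neg.add h2
  exact h3.congr_deriv (by ring)

lemma gFun_continuous : Continuous gFun := by
  unfold gFun
  exact (Real.continuous_mul_log.neg).add
    (Real.continuous_mul_log.comp (continuous_const.add continuous_id))

lemma gFun_mono : MonotoneOn gFun (Set.Ici (0 : ℝ)) := by
  apply monotoneOn_of_deriv_nonneg (convex_Ici 0) gFun_continuous.continuousOn
  · intro x hx
    rw [interior_Ici] at hx
    exact (gFun_hasDerivAt hx).differentiableAt.differentiableWithinAt
  · intro x hx
    rw [interior_Ici] at hx
    rw [(gFun_hasDerivAt hx).deriv]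
    have := Real.log_le_log hx (by linarith : x ≤ 1 + x)
    linarith

lemma gFun_zero : gFun 0 = 0 := by simp [gFun]

lemma gFun_nonneg {x : ℝ} (hx : 0 ≤ x) : 0 ≤ gFun x := by
  have := gFun_mono (Set.mem_Ici.mpr (le_refl (0:ℝ))) (Set.mem_Ici.mpr hx) hx
  rwa [gFun_zero] at this


lemma real_smul_mat {d : ℕ} (r : ℝ) (M : Matrix (Fin d) (Fin d) ℂ) :
    r • M = (r : ℂ) • M := by
  ext i j
  simp [Matrix.smul_apply, Complex.real_smul]

lemma exists_decomp {d : ℕ} (ρ σ : Matrix (Fin d) (Fin d) ℂ) (hρ : IsState ρ) (hσ : IsState σ) :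
    ρ = σ ∨ ∃ (t : ℝ) (ωp ωm : Matrix (Fin d) (Fin d) ℂ),
      0 < t ∧ 2 * t = traceNorm (ρ - σ) ∧ IsState ωp ∧ IsState ωm ∧
      ρ + t • ωm = σ + t • ωp := by
  set X := ρ - σ with hXdef
  have hXh : X.IsHermitian := hρ.1.1.sub hσ.1.1
  set U : Matrix (Fin d) (Fin d) ℂ := (hXh.eigenvectorUnitary : Matrix (Fin d) (Fin d) ℂ)
    with hUdef
  set e : Fin d → ℝ := hXh.eigenvalues with hedef
  have hU1 : star U * U = 1 := hXh.eigenvectorUnitary.2.1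
  have hU1' : ∀ M : Matrix (Fin d) (Fin d) ℂ, star U * (U * M) = M := by
    intro M; rw [← Matrix.mul_assoc, hU1, Matrix.one_mul]
  set C : (Fin d → ℝ) → Matrix (Fin d) (Fin d) ℂ :=
    fun f => U * Matrix.diagonal (fun i => (f i : ℂ)) * star U with hCdef
  have hX : X = C e := hXh.spectral_theorem
  have h_tr : ∀ f, (C f).trace = ((∑ i, f i : ℝ) : ℂ) := by
    intro f
    rw [hCdef]
    rw [Matrix.trace_mul_cycle, hU1, Matrix.one_mul, Matrix.trace_diagonal]
    push_cast
    rfl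
  have h_psd : ∀ f, (∀ i, 0 ≤ f i) → (C f).PosSemidef := by
    intro f hf
    have hd : Matrix.PosSemidef (Matrix.diagonal (fun i => (f i : ℂ))) := by
      refine Matrix.PosSemidef.diagonal fun i => ?_
      simp only [Pi.zero_apply]
      exact_mod_cast hf i
    simpa [hCdef, Matrix.star_eq_conjTranspose] using hd.mul_mul_conjTranspose_same U
  have h_add : ∀ f g, C f + C g = C (fun i => f i + g i) := by
    intro f g
    simp only [hCdef, ← Matrix.add_mul, ← Matrix.mul_add, Matrix.diagonal_add]
    push_cast
    rfl
  have h_smul : ∀ (r : ℝ) f, r • C f = C (fun i => r * f i) := by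
    intro r f
    have hd : (Matrix.diagonal fun i => ((r * f i : ℝ) : ℂ))
        = (r : ℂ) • (Matrix.diagonal fun i => ((f i : ℝ) : ℂ)) := by
      ext i j
      rcases eq_or_ne i j with h | h
      · subst h; simp [Complex.ofReal_mul]
      · simp [Matrix.diagonal_apply_ne _ h]
    rw [real_smul_mat, hCdef]
    dsimp only
    rw [hd, Matrix.mul_smul, Matrix.smul_mul]
  have hmul : ∀ f g, C f * C g = C (fun i => f i * g i) := by
    intro f g
    simp only [hCdef, Matrix.mul_assoc]
    rw [hU1', ← Matrix.mul_assoc (Matrix.diagonal _), Matrix.diagonal_mul_diagonal]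
    push_cast
    rfl
  -- trace of X is zero
  have hsum_e : ∑ i, e i = 0 := by
    have h1 : (C e).trace = 0 := by
      rw [← hX, hXdef, Matrix.trace_sub, hρ.2, hσ.2, sub_self]
    rw [h_tr] at h1
    exact_mod_cast h1
  set ep : Fin d → ℝ := fun i => max (e i) 0 with hepdef
  set en : Fin d → ℝ := fun i => max (-(e i)) 0 with hendef
  have hep_nonneg : ∀ i, 0 ≤ ep i := fun i => le_max_right _ _
  have hen_nonneg : ∀ i, 0 ≤ en i := fun i => le_max_right _ _
  have hpe : ∀ i, ep i - en i = e i := by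
    intro i; simp only [hepdef, hendef]
    rcases le_total (e i) 0 with h | h
    · rw [max_eq_right h, max_eq_left (by linarith)]; ring
    · rw [max_eq_left h, max_eq_right (by linarith)]; ring
  set t : ℝ := ∑ i, ep i with htdef
  have ht0 : 0 ≤ t := Finset.sum_nonneg fun i _ => hep_nonneg i
  have hsum_en : ∑ i, en i = t := by
    have h2 : ∑ i, (ep i - en i) = 0 := by
      simp_rw [hpe]; exact hsum_e
    rw [Finset.sum_sub_distrib] at h2
    linarith
  -- trace norm
  have habs : ∀ i, |e i| = ep i + en i := by
    intro i
    rcases le_total (e i) 0 with h | h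
    · rw [abs_of_nonpos h]; simp only [hepdef, hendef]
      rw [max_eq_right h, max_eq_left (by linarith)]; ring
    · rw [abs_of_nonneg h]; simp only [hepdef, hendef]
      rw [max_eq_left h, max_eq_right (by linarith)]; ring
  have htn : traceNorm X = 2 * t := by
    have hBpsd : (C (fun i => |e i|)).PosSemidef := h_psd _ fun i => abs_nonneg _
    have hsq : (C (fun i => |e i|)) ^ 2 = X.conjTranspose * X := by
      rw [pow_two, hmul, (show X.conjTranspose = X from hXh), hX, hmul,
        (show (fun i => |e i| * |e i|) = fun i => e i * e i from
          funext fun i => abs_mul_abs_self _)]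
    have hsqrt : C (fun i => |e i|) = (Matrix.posSemidef_conjTranspose_mul_self X).sqrt := by
      have hA := Matrix.posSemidef_conjTranspose_mul_self X
      have h1 : (Matrix.posSemidef_conjTranspose_mul_self X).sqrt = cfc Real.sqrt (X.conjTranspose * X) := by
        rw [(Matrix.posSemidef_conjTranspose_mul_self X).1.cfc_eq, Matrix.IsHermitian.cfc,
          Unitary.conjStarAlgAut_apply]
        rfl
      have h2 : X.conjTranspose * X = cfc (fun x : ℝ => x ^ 2) X := by
        rw [cfc_pow_id X 2 hXh.isSelfAdjoint, pow_two, (show X.conjTranspose = X from hXh)]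
      have h3 : C (fun i => |e i|) = cfc (fun x : ℝ => |x|) X := by
        rw [hXh.cfc_eq, Matrix.IsHermitian.cfc, Unitary.conjStarAlgAut_apply]
        rfl
      rw [h1, h2, ← cfc_comp Real.sqrt (fun x : ℝ => x ^ 2) X hXh.isSelfAdjoint, h3]
      exact cfc_congr fun x _ => (Real.sqrt_sq_eq_abs x).symm
    show ((Matrix.posSemidef_conjTranspose_mul_self X).sqrt).trace.re = 2 * t
    rw [← hsqrt, h_tr, Complex.ofReal_re]
    simp_rw [habs]
    rw [Finset.sum_add_distrib, hsum_en, ← htdef]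
    ring
  by_cases ht : t = 0
  · left
    have hep0 : ∀ i ∈ Finset.univ, ep i = 0 :=
      (Finset.sum_eq_zero_iff_of_nonneg (fun i _ => hep_nonneg i)).mp ht
    have hen0 : ∀ i ∈ Finset.univ, en i = 0 :=
      (Finset.sum_eq_zero_iff_of_nonneg (fun i _ => hen_nonneg i)).mp (by rw [hsum_en, ht])
    have he0 : ∀ i, e i = 0 := by
      intro i
      have h3 := hpe i
      rw [hep0 i (Finset.mem_univ i), hen0 i (Finset.mem_univ i)] at h3
      linarith
    have hX0 : X = 0 := by
      rw [hX, hCdef]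
      have h4 : (fun i => ((e i : ℝ) : ℂ)) = fun _ => (0 : ℂ) := by
        funext i; rw [he0 i]; norm_num
      dsimp only
      rw [h4]
      simp
    rw [hXdef] at hX0
    exact sub_eq_zero.mp hX0
  · right
    have htpos : 0 < t := lt_of_le_of_ne ht0 (Ne.symm ht)
    refine ⟨t, C (fun i => t⁻¹ * ep i), C (fun i => t⁻¹ * en i), htpos, by rw [htn], ?_, ?_, ?_⟩
    · refine ⟨h_psd _ fun i => by positivity, ?_⟩
      rw [h_tr, ← Finset.mul_sum, ← htdef, inv_mul_cancel₀ ht]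
      norm_num
    · refine ⟨h_psd _ fun i => by positivity, ?_⟩
      rw [h_tr, ← Finset.mul_sum, hsum_en, inv_mul_cancel₀ ht]
      norm_num
    · have h1 : t • C (fun i => t⁻¹ * ep i) = C ep := by
        rw [h_smul]
        congr 1
        funext i
        field_simp
      have h2 : t • C (fun i => t⁻¹ * en i) = C en := by
        rw [h_smul]
        congr 1
        funext i
        field_simp
      rw [h1, h2]
      have key : X + C en = C ep := by
        rw [hX, h_add,
          (show (fun i => e i + en i) = ep from funext fun i => by linarith [hpe i])]
      have h5 : ρ = σ + X := by rw [hXdef]; abel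
      rw [h5, add_assoc, key]

theorem continuity_general {d : ℕ} (Z : Matrix (Fin d) (Fin d) ℂ → ℝ)
    (hZ : ∀ (K : ℕ) (lam : Fin K → ℝ) (ρs : Fin K → Matrix (Fin d) (Fin d) ℂ),
      (∀ k, 0 ≤ lam k) → ∑ k, lam k = 1 → (∀ k, IsState (ρs k)) →
      0 ≤ Z (∑ k, lam k • ρs k) - ∑ k, lam k * Z (ρs k) ∧
        Z (∑ k, lam k • ρs k) - ∑ k, lam k * Z (ρs k) ≤ shannonEntropy lam)
    (hbdd : BddAbove {x : ℝ | ∃ μ ν, IsState μ ∧ IsState ν ∧ x = |Z μ - Z ν|})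
    (ρ σ : Matrix (Fin d) (Fin d) ℂ) (hρ : IsState ρ) (hσ : IsState σ)
    (ε : ℝ) (hε0 : 0 ≤ ε) (hε : (1/2) * traceNorm (ρ - σ) ≤ ε) :
    |Z ρ - Z σ| ≤ gFun ε +
      ε * sSup {x : ℝ | ∃ μ ν, IsState μ ∧ IsState ν ∧ x = |Z μ - Z ν|} := by
  
  classical
  set κ := sSup {x : ℝ | ∃ μ ν, IsState μ ∧ IsState ν ∧ x = |Z μ - Z ν|} with hκdef
  have hκ0 : 0 ≤ κ := le_csSup hbdd ⟨ρ, ρ, hρ, hρ, by simp⟩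
  rcases exists_decomp ρ σ hρ hσ with heq | ⟨t, ωp, ωm, htpos, htn, hωp, hωm, hkey⟩
  · rw [heq, sub_self, abs_zero]
    have h1 := gFun_nonneg hε0
    have h2 := mul_nonneg hε0 hκ0
    linarith
  · have htε : t ≤ ε := by
      rw [← htn] at hε
      linarith
    have h1t : (0 : ℝ) < 1 + t := by linarith
    set a : ℝ := (1 + t)⁻¹ with hadef
    set b : ℝ := t * (1 + t)⁻¹ with hbdef
    have ha : 0 ≤ a := by rw [hadef]; positivity
    have hb : 0 ≤ b := by rw [hbdef]; positivity
    have hab : a + b = 1 := by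
      rw [hadef, hbdef]
      field_simp
    have hba : b = a * t := by rw [hadef, hbdef]; ring
    have hAa : (1 + t) * a = 1 := by
      rw [hadef]; field_simp
    have hBb : (1 + t) * b = t := by
      rw [hbdef]; field_simp
    -- the two convex decompositions of the same state
    have hkey2 : a • ρ + b • ωm = a • σ + b • ωp := by
      have e1 : a • ρ + b • ωm = a • (ρ + t • ωm) := by
        rw [smul_add, smul_smul, ← hba]
      have e2 : a • σ + b • ωp = a • (σ + t • ωp) := by
        rw [smul_add, smul_smul, ← hba]
      rw [e1, e2, hkey]
    have hlam_nonneg : ∀ k : Fin 2, 0 ≤ (![a, b]) k := by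
      intro k; fin_cases k
      · simpa using ha
      · simpa using hb
    have hlam_sum : ∑ k, (![a, b]) k = 1 := by
      rw [Fin.sum_univ_two]
      simpa using hab
    have hst1 : ∀ k : Fin 2, IsState ((![ρ, ωm]) k) := by
      intro k; fin_cases k
      · simpa using hρ
      · simpa using hωm
    have hst2 : ∀ k : Fin 2, IsState ((![σ, ωp]) k) := by
      intro k; fin_cases k
      · simpa using hσ
      · simpa using hωp
    obtain ⟨hL1, hU1⟩ := hZ 2 ![a, b] ![ρ, ωm] hlam_nonneg hlam_sum hst1
    obtain ⟨hL2, hU2⟩ := hZ 2 ![a, b] ![σ, ωp] hlam_nonneg hlam_sum hst2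
    simp only [Fin.sum_univ_two, Matrix.cons_val_zero, Matrix.cons_val_one,
      Matrix.head_cons] at hL1 hU1 hL2 hU2
    rw [hkey2] at hL1 hU1
    set H : ℝ := shannonEntropy ![a, b] with hHdef
    have hHval : H = -(a * Real.log a + b * Real.log b) := by
      rw [hHdef, shannonEntropy, Fin.sum_univ_two]
      simp
    have hla : Real.log a = -Real.log (1 + t) := by
      rw [hadef, Real.log_inv]
    have hlb : Real.log b = Real.log t - Real.log (1 + t) := by
      rw [hbdef, Real.log_mul htpos.ne' (by positivity), Real.log_inv]
      ring
    have hHg : (1 + t) * H = gFun t := by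
      rw [hHval, hla, hlb, hadef, hbdef, gFun]
      have h1 : (1 : ℝ) + t ≠ 0 := h1t.ne'
      field_simp
      ring
    -- bound |Z ρ - Z σ|
    have hκb : |Z ωp - Z ωm| ≤ κ := le_csSup hbdd ⟨ωp, ωm, hωp, hωm, rfl⟩
    have hF1 : |(a * Z ρ + b * Z ωm) - (a * Z σ + b * Z ωp)| ≤ H :=
      abs_le.mpr ⟨by linarith, by linarith⟩
    have htri : |a * (Z ρ - Z σ)| ≤
        |(a * Z ρ + b * Z ωm) - (a * Z σ + b * Z ωp)| + |b * (Z ωp - Z ωm)| := by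
      have e3 : a * (Z ρ - Z σ) =
          ((a * Z ρ + b * Z ωm) - (a * Z σ + b * Z ωp)) + b * (Z ωp - Z ωm) := by ring
      rw [e3]
      exact abs_add_le _ _
    rw [abs_mul, abs_mul, abs_of_nonneg ha, abs_of_nonneg hb] at htri
    have hbk : b * |Z ωp - Z ωm| ≤ b * κ := mul_le_mul_of_nonneg_left hκb hb
    have h3 : a * |Z ρ - Z σ| ≤ H + b * κ := by linarith
    have h4 : |Z ρ - Z σ| ≤ (1 + t) * H + t * κ := by
      calc |Z ρ - Z σ| = (1 + t) * (a * |Z ρ - Z σ|) := by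
            rw [← mul_assoc, hAa, one_mul]
        _ ≤ (1 + t) * (H + b * κ) := mul_le_mul_of_nonneg_left h3 h1t.le
        _ = (1 + t) * H + (1 + t) * b * κ := by ring
        _ = (1 + t) * H + t * κ := by rw [hBb]
    have h5 : gFun t ≤ gFun ε :=
      gFun_mono (Set.mem_Ici.mpr htpos.le) (Set.mem_Ici.mpr hε0) htε
    have h6 : t * κ ≤ ε * κ := mul_le_mul_of_nonneg_right htε hκ0
    rw [hHg] at h4
    linarith
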